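/- Fix x ∈ X with the map s ↦ σ_s(x) finite-to-one, let μ_x be the left regular orbit cocycle at x, and let γ be a character of S. Then the commuting contractions ρ_{x,γμ_x}(S_s) (s ∈ S) dilate to a commuting group of unitaries: there exist a complex Hilbert space K, a linear isometry V : ℓ²(S(x)) → K, and a group homomorphism U from G into the unitary group of K such that ρ_{x,γμ_x}(S_s) = V* ∘ U(i(s)) ∘ V for all s ∈ S. -/

import Mathlib

noncomputable section
namespace OrbitDil

local notation "⟪" x ", " y "⟫" => inner ℂ x y

lemma single_apply' {α : Type} [DecidableEq α] (i : α) (a : ℂ) (j : α) :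
    (lp.single 2 i a : lp (fun _ : α => ℂ) 2) j = if j = i then a else 0 := by
  rw [lp.single_apply]
  split_ifs with h
  · subst h; simp
  · simp [h]

lemma single_eq_smul {α : Type} [DecidableEq α] (i : α) (a : ℂ) :
    (lp.single 2 i a : lp (fun _ : α => ℂ) 2) = a • lp.single 2 i (1 : ℂ) := by
  rw [← lp.single_smul, smul_eq_mul, mul_one]

lemma coord_eq_inner {α : Type} [DecidableEq α] (f : lp (fun _ : α => ℂ) 2) (j : α) :
    f j = ⟪lp.single 2 j (1 : ℂ), f⟫ := by
  rw [lp.inner_single_left, RCLike.inner_apply', map_one, one_mul]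

lemma clm_ext_single {ι : Type} [DecidableEq ι] {E : Type} [NormedAddCommGroup E]
    [NormedSpace ℂ E] (A B : lp (fun _ : ι => ℂ) 2 →L[ℂ] E)
    (h : ∀ (j : ι) (a : ℂ), A (lp.single 2 j a) = B (lp.single 2 j a)) : A = B := by
  ext f
  have hf : HasSum (fun j : ι => lp.single 2 j (f j)) f :=
    lp.hasSum_single (by norm_num) f
  have hA : HasSum (fun j : ι => A (lp.single 2 j (f j))) (A f) := A.hasSum hf
  have hB : HasSum (fun j : ι => B (lp.single 2 j (f j))) (B f) := B.hasSum hf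
  have : (fun j : ι => A (lp.single 2 j (f j))) = fun j : ι => B (lp.single 2 j (f j)) :=
    funext fun j => h j (f j)
  rw [this] at hA
  exact hA.unique hB

/-- the isometry `ℂ → E` determined by a unit vector. -/
def unitIso {E : Type} [NormedAddCommGroup E] [InnerProductSpace ℂ E] (e : E)
    (he : ‖e‖ = 1) : ℂ →ₗᵢ[ℂ] E :=
  ⟨LinearMap.toSpanSingleton ℂ E e, fun a => by
    simp [LinearMap.toSpanSingleton_apply, norm_smul, he]⟩

@[simp] lemma unitIso_apply {E : Type} [NormedAddCommGroup E] [InnerProductSpace ℂ E]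
    (e : E) (he : ‖e‖ = 1) (a : ℂ) : unitIso e he a = a • e := rfl

/-- construction of the isometry `V` from an orthonormal family. -/
lemma exists_isometry {ι β : Type} [DecidableEq ι]
    (e : ι → lp (fun _ : β => ℂ) 2)
    (he : ∀ y, ‖e y‖ = 1) (horth : ∀ y z, y ≠ z → ⟪e y, e z⟫ = 0) :
    ∃ V : lp (fun _ : ι => ℂ) 2 →L[ℂ] lp (fun _ : β => ℂ) 2,
      (∀ y a, V (lp.single 2 y a) = a • e y) ∧ (∀ f, ‖V f‖ = ‖f‖) ∧
      (∀ f₁ f₂, ⟪V f₁, V f₂⟫ = ⟪f₁, f₂⟫) := by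
  have hfam : OrthogonalFamily ℂ (fun _ : ι => ℂ) (fun y => unitIso (e y) (he y)) := by
    intro y z hyz a b
    simp only [unitIso_apply]
    rw [inner_smul_left, inner_smul_right, horth y z hyz, mul_zero, mul_zero]
  refine ⟨hfam.linearIsometry.toContinuousLinearMap, fun y a => ?_, fun f => ?_, fun f₁ f₂ => ?_⟩
  · simp only [LinearIsometry.coe_toContinuousLinearMap]
    rw [hfam.linearIsometry_apply_single]
    rfl
  · simp only [LinearIsometry.coe_toContinuousLinearMap]
    exact hfam.linearIsometry.norm_map f
  · simp only [LinearIsometry.coe_toContinuousLinearMap]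
    exact hfam.linearIsometry.inner_map_map f₁ f₂

end OrbitDil


set_option maxHeartbeats 1600000 in
/-- the commuting contractions `ρ_{x,γμ_x}(S_s)` dilate to a commuting
group of unitaries indexed by the enveloping group `G`: `ρ(S_s) = V* U(i s) V`. -/
theorem orbit_contractions_dilate_to_unitaries
    {S : Type} [AddCancelCommMonoid S] [Countable S] [DecidableEq S]
    {X : Type} [MetricSpace X] [CompactSpace X] [Nonempty X] [DecidableEq X]
    (σ : S → C(X, X))
    (hσ0 : σ 0 = ContinuousMap.id X)
    (hσadd : ∀ s t : S, σ (s + t) = (σ s).comp (σ t))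
    (hσsurj : ∀ s : S, Function.Surjective (σ s))
    -- the enveloping group G = S - S
    {G : Type} [AddCommGroup G]
    (i : S → G) (hi0 : i 0 = 0) (hiadd : ∀ s t : S, i (s + t) = i s + i t)
    (hiinj : Function.Injective i)
    (hgen : ∀ g : G, ∃ s t : S, g = i s - i t)
    (x : X)
    -- the map s ↦ σ_s(x) is finite-to-one
    (hfin : ∀ y : X, {s : S | (σ s) x = y}.Finite)
    -- a character of S
    (γ : S → ℂ)
    (hγ0 : γ 0 = 1) (hγadd : ∀ s t : S, γ (s + t) = γ s * γ t)
    (hγabs : ∀ s : S, ‖γ s‖ = 1)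
    -- the action of S on the orbit S(x)
    (στ : S → {y : X // ∃ s : S, (σ s) x = y} → {y : X // ∃ s : S, (σ s) x = y})
    (hστ : ∀ (t : S) (y : {y : X // ∃ s : S, (σ s) x = y}), (στ t y : X) = (σ t) (y : X))
    -- Q is the orthogonal projection of ℓ²(S) onto H₀
    (Q : lp (fun _ : S => ℂ) 2 →L[ℂ] lp (fun _ : S => ℂ) 2)
    (hQmem : ∀ η : lp (fun _ : S => ℂ) 2,
      Q η ∈ (Submodule.span ℂ {v : lp (fun _ : S => ℂ) 2 | ∃ s t : S,
        (σ s) x = (σ t) x ∧ v = lp.single 2 s (1 : ℂ) - lp.single 2 t (1 : ℂ)}).topologicalClosure)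
    (hQfix : ∀ η ∈ (Submodule.span ℂ {v : lp (fun _ : S => ℂ) 2 | ∃ s t : S,
        (σ s) x = (σ t) x ∧ v = lp.single 2 s (1 : ℂ) - lp.single 2 t (1 : ℂ)}).topologicalClosure,
      Q η = η)
    (hQorth : ∀ (η : lp (fun _ : S => ℂ) 2),
      ∀ v ∈ (Submodule.span ℂ {v : lp (fun _ : S => ℂ) 2 | ∃ s t : S,
        (σ s) x = (σ t) x ∧ v = lp.single 2 s (1 : ℂ) - lp.single 2 t (1 : ℂ)}).topologicalClosure,
      inner ℂ (η - Q η) v = (0 : ℂ))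
    -- the left regular orbit cocycle
    (μx : S → {y : X // ∃ s : S, (σ s) x = y} → ℝ)
    (hμx : ∀ t u : S,
      μx t ⟨(σ u) x, ⟨u, rfl⟩⟩ =
        ‖lp.single 2 (t + u) (1 : ℂ) - Q (lp.single 2 (t + u) (1 : ℂ))‖ /
          ‖lp.single 2 u (1 : ℂ) - Q (lp.single 2 u (1 : ℂ))‖)
    -- the contractions ρ_{x,γμ_x}(S_t)
    (ρS : S →
      (lp (fun _ : {y : X // ∃ s : S, (σ s) x = y} => ℂ) 2 →L[ℂ]
        lp (fun _ : {y : X // ∃ s : S, (σ s) x = y} => ℂ) 2))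
    (hρS : ∀ (t : S) (y : {y : X // ∃ s : S, (σ s) x = y}),
      ρS t (lp.single 2 y (1 : ℂ)) = (γ t * (μx t y : ℂ)) • lp.single 2 (στ t y) (1 : ℂ)) :
    ∃ (K : Type) (_ : NormedAddCommGroup K) (_ : InnerProductSpace ℂ K),
      ∃ (_ : CompleteSpace K)
        (V : lp (fun _ : {y : X // ∃ s : S, (σ s) x = y} => ℂ) 2 →L[ℂ] K)
        (U : G → (K →L[ℂ] K)),
        -- V is a linear isometry
        (∀ η, ‖V η‖ = ‖η‖) ∧
        -- U is a group homomorphism of G into the unitary group of K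
        U 0 = ContinuousLinearMap.id ℂ K ∧
        (∀ g h : G, U (g + h) = (U g).comp (U h)) ∧
        (∀ g : G, (U g).comp (ContinuousLinearMap.adjoint (U g)) =
          ContinuousLinearMap.id ℂ K) ∧
        (∀ g : G, (ContinuousLinearMap.adjoint (U g)).comp (U g) =
          ContinuousLinearMap.id ℂ K) ∧
        -- ρ(S_s) = V* U(i s) V
        (∀ s : S, ρS s = (ContinuousLinearMap.adjoint V).comp ((U (i s)).comp V)) := by
  classical
  -- ## basic facts about the classes `{s | σ s x = y}`
  have hσadd' : ∀ s u : S, (σ (s + u)) x = (σ s) ((σ u) x) := by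
    intro s u; rw [hσadd]; rfl
  have hmem : ∀ (v : S) (y : {y : X // ∃ s : S, (σ s) x = y}),
      v ∈ (hfin y.1).toFinset ↔ (σ v) x = y.1 := by
    intro v y; simp [Set.Finite.mem_toFinset]
  have hcard_pos : ∀ y : {y : X // ∃ s : S, (σ s) x = y}, 0 < (hfin y.1).toFinset.card := by
    intro y
    obtain ⟨u, hu⟩ := y.2
    exact Finset.card_pos.2 ⟨u, (hmem u y).2 hu⟩
  have hdisj : ∀ (y z : {y : X // ∃ s : S, (σ s) x = y}) (v : S),
      v ∈ (hfin y.1).toFinset → v ∈ (hfin z.1).toFinset → y = z := by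
    intro y z v hy hz
    exact Subtype.ext (((hmem v y).1 hy).symm.trans ((hmem v z).1 hz))
  have hclass_mem : ∀ (s : S) (y z : {y : X // ∃ s : S, (σ s) x = y}) (v : S),
      v ∈ (hfin y.1).toFinset → ((s + v) ∈ (hfin z.1).toFinset ↔ z = στ s y) := by
    intro s y z v hv
    have h1 : (σ (s + v)) x = (στ s y).1 := by
      rw [hσadd' s v, (hmem v y).1 hv, hστ]
    rw [hmem, h1]
    exact ⟨fun h => (Subtype.ext h).symm, fun h => by rw [h]⟩
  -- ## computation of `‖ξ_u - Q ξ_u‖`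
  have hν : ∀ u : S, ‖lp.single 2 u (1 : ℂ) - Q (lp.single 2 u (1 : ℂ))‖
      = (Real.sqrt ((hfin ((σ u) x)).toFinset.card))⁻¹ := by
    intro u
    set C : Finset S := (hfin ((σ u) x)).toFinset with hCdef
    have hmemC : ∀ v, v ∈ C ↔ (σ v) x = (σ u) x := by
      intro v; simp [hCdef, Set.Finite.mem_toFinset]
    have hnpos : 0 < C.card := Finset.card_pos.2 ⟨u, (hmemC u).2 rfl⟩
    set msum : lp (fun _ : S => ℂ) 2 := ∑ t ∈ C, lp.single 2 t (1 : ℂ) with hmsum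
    set m : lp (fun _ : S => ℂ) 2 := ((C.card : ℂ))⁻¹ • msum with hm
    have h1 : lp.single 2 u (1 : ℂ) - m ∈ Submodule.span ℂ {v : lp (fun _ : S => ℂ) 2 |
        ∃ s t : S, (σ s) x = (σ t) x ∧ v = lp.single 2 s (1 : ℂ) - lp.single 2 t (1 : ℂ)} := by
      have expand : lp.single 2 u (1 : ℂ) - m
          = ((C.card : ℂ))⁻¹ • ∑ t ∈ C, (lp.single 2 u (1 : ℂ) - lp.single 2 t (1 : ℂ)) := by
        rw [Finset.sum_sub_distrib, Finset.sum_const, smul_sub, hm, hmsum,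
          ← Nat.cast_smul_eq_nsmul ℂ, smul_smul,
          inv_mul_cancel₀ (by exact_mod_cast hnpos.ne'), one_smul]
      rw [expand]
      refine Submodule.smul_mem _ _ (Submodule.sum_mem _ fun t ht => Submodule.subset_span ?_)
      exact ⟨u, t, ((hmemC t).1 ht).symm, rfl⟩
    have h2 : ∀ w ∈ (Submodule.span ℂ {v : lp (fun _ : S => ℂ) 2 | ∃ s t : S,
        (σ s) x = (σ t) x ∧ v = lp.single 2 s (1 : ℂ) -
        lp.single 2 t (1 : ℂ)}).topologicalClosure, inner ℂ m w = (0 : ℂ) := by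
      have hgen0 : ∀ w ∈ {v : lp (fun _ : S => ℂ) 2 | ∃ s t : S,
          (σ s) x = (σ t) x ∧ v = lp.single 2 s (1 : ℂ) - lp.single 2 t (1 : ℂ)},
          inner ℂ m w = (0 : ℂ) := by
        rintro w ⟨s', t', hst, rfl⟩
        rw [hm, inner_smul_left]
        have hz : inner ℂ msum (lp.single 2 s' (1 : ℂ) - lp.single 2 t' (1 : ℂ)) = (0 : ℂ) := by
          rw [hmsum, sum_inner]
          have hterm : ∀ t ∈ C, inner (𝕜 := ℂ) (lp.single 2 t (1 : ℂ) : lp (fun _ : S => ℂ) 2)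
              (lp.single 2 s' (1 : ℂ) - lp.single 2 t' (1 : ℂ))
              = ((if t = s' then (1 : ℂ) else 0) - (if t = t' then (1 : ℂ) else 0)) := by
            intro t _
            rw [lp.inner_single_left, RCLike.inner_apply', map_one, one_mul, lp.coeFn_sub,
              Pi.sub_apply, OrbitDil.single_apply', OrbitDil.single_apply']
          rw [Finset.sum_congr rfl hterm, Finset.sum_sub_distrib,
            Finset.sum_ite_eq' C s' (fun _ => (1 : ℂ)), Finset.sum_ite_eq' C t' (fun _ => (1 : ℂ))]
          have hiff : s' ∈ C ↔ t' ∈ C := by rw [hmemC, hmemC, hst]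
          by_cases hs' : s' ∈ C
          · rw [if_pos hs', if_pos (hiff.1 hs'), sub_self]
          · rw [if_neg hs', if_neg (fun h => hs' (hiff.2 h)), sub_self]
        rw [hz, mul_zero]
      intro w hw
      have hle : (Submodule.span ℂ {v : lp (fun _ : S => ℂ) 2 | ∃ s t : S,
          (σ s) x = (σ t) x ∧ v = lp.single 2 s (1 : ℂ) -
          lp.single 2 t (1 : ℂ)}).topologicalClosure ≤ (ℂ ∙ m)ᗮ :=
        Submodule.topologicalClosure_minimal _
          (Submodule.span_le.2 fun w hw =>
            Submodule.mem_orthogonal_singleton_iff_inner_right.2 (hgen0 w hw))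
          (Submodule.isClosed_orthogonal _)
      exact Submodule.mem_orthogonal_singleton_iff_inner_right.1 (hle hw)
    have h3 : lp.single 2 u (1 : ℂ) - Q (lp.single 2 u (1 : ℂ)) = m := by
      have hz1 : (lp.single 2 u (1 : ℂ) - Q (lp.single 2 u (1 : ℂ))) - m ∈
          (Submodule.span ℂ {v : lp (fun _ : S => ℂ) 2 | ∃ s t : S,
          (σ s) x = (σ t) x ∧ v = lp.single 2 s (1 : ℂ) -
          lp.single 2 t (1 : ℂ)}).topologicalClosure := by
        have hre : (lp.single 2 u (1 : ℂ) - Q (lp.single 2 u (1 : ℂ))) - m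
            = (lp.single 2 u (1 : ℂ) - m) - Q (lp.single 2 u (1 : ℂ)) := by abel
        rw [hre]
        exact Submodule.sub_mem _ ((Submodule.le_topologicalClosure _) h1) (hQmem _)
      have hz2 : inner ℂ ((lp.single 2 u (1 : ℂ) - Q (lp.single 2 u (1 : ℂ))) - m)
          ((lp.single 2 u (1 : ℂ) - Q (lp.single 2 u (1 : ℂ))) - m) = (0 : ℂ) := by
        rw [inner_sub_left, hQorth _ _ hz1, h2 _ hz1, sub_zero]
      exact sub_eq_zero.1 (inner_self_eq_zero.1 hz2)
    have hns : ‖msum‖ = Real.sqrt C.card := by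
      have hpow := lp.norm_sum_single (p := 2) (by norm_num) (fun _ : S => (1 : ℂ)) C
      simp only [norm_one, ENNReal.toReal_ofNat, Real.one_rpow, Finset.sum_const,
        nsmul_eq_mul, mul_one] at hpow
      rw [← hmsum] at hpow
      have h2n : ‖msum‖ ^ (2 : ℕ) = (C.card : ℝ) := by
        rw [← Real.rpow_natCast ‖msum‖ 2]
        exact_mod_cast hpow
      rw [← h2n, Real.sqrt_sq (norm_nonneg _)]
    rw [h3, hm, norm_smul, hns]
    have hcn : ‖((C.card : ℂ))⁻¹‖ = ((C.card : ℝ))⁻¹ := by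
      rw [norm_inv]; norm_num
    rw [hcn]
    have hs0 : Real.sqrt C.card ≠ 0 := by
      refine Real.sqrt_ne_zero'.2 ?_
      exact_mod_cast hnpos
    have hc0 : (C.card : ℝ) ≠ 0 := by exact_mod_cast hnpos.ne'
    field_simp
    exact Real.sq_sqrt (Nat.cast_nonneg _)
  -- ## the value of the cocycle μx
  have hμval : ∀ (s : S) (y : {y : X // ∃ s : S, (σ s) x = y}),
      μx s y = Real.sqrt ((hfin y.1).toFinset.card) /
        Real.sqrt ((hfin (στ s y).1).toFinset.card) := by
    intro s y
    obtain ⟨u, hu⟩ := y.2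
    have hyq : (⟨(σ u) x, ⟨u, rfl⟩⟩ : {y : X // ∃ s : S, (σ s) x = y}) = y := Subtype.ext hu
    rw [← hyq, hμx s u, hν (s + u), hν u]
    have hst : (στ s (⟨(σ u) x, ⟨u, rfl⟩⟩ : {y : X // ∃ s : S, (σ s) x = y})).1
        = (σ (s + u)) x := by
      rw [hστ]; exact (hσadd' s u).symm
    rw [hst, inv_div_inv]
  -- ## the extension γ' of the character γ to G
  have hγconj : ∀ s : S, γ s * (starRingEnd ℂ) (γ s) = 1 := by
    intro s
    rw [Complex.mul_conj]
    have : ‖γ s‖ = 1 := by exact hγabs s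
    rw [Complex.normSq_eq_norm_sq, this]
    norm_num
  have hγwd : ∀ s t s' t' : S, i s - i t = i s' - i t' →
      γ s * (starRingEnd ℂ) (γ t) = γ s' * (starRingEnd ℂ) (γ t') := by
    intro s t s' t' h
    rw [sub_eq_sub_iff_add_eq_add] at h
    have h1 : i (s + t') = i (s' + t) := by rw [hiadd, hiadd]; exact h
    have h2 : s + t' = s' + t := hiinj h1
    have h3 : γ s * γ t' = γ s' * γ t := by rw [← hγadd, ← hγadd, h2]
    have h4 := hγconj t
    have h5 := hγconj t'
    linear_combination ((starRingEnd ℂ) (γ t) * (starRingEnd ℂ) (γ t')) * h3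
      - γ s * (starRingEnd ℂ) (γ t) * h5 + γ s' * (starRingEnd ℂ) (γ t') * h4
  set γ' : G → ℂ := fun g => γ (hgen g).choose * (starRingEnd ℂ) (γ (hgen g).choose_spec.choose)
    with hγ'def
  have hγ'spec : ∀ (g : G) (s t : S), g = i s - i t →
      γ' g = γ s * (starRingEnd ℂ) (γ t) := by
    intro g s t h
    have hg := (hgen g).choose_spec.choose_spec
    simp only [hγ'def]
    exact hγwd _ _ s t (hg.symm.trans h)
  have hγ'i : ∀ s : S, γ' (i s) = γ s := by
    intro s
    rw [hγ'spec (i s) s 0 (by rw [hi0, sub_zero]), hγ0, map_one, mul_one]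
  have hγ'0 : γ' 0 = 1 := by
    rw [hγ'spec 0 0 0 (by rw [sub_self]), hγ0, map_one, mul_one]
  have hγ'add : ∀ g h : G, γ' (g + h) = γ' g * γ' h := by
    intro g h
    obtain ⟨s, t, hg⟩ := hgen g
    obtain ⟨s', t', hh⟩ := hgen h
    rw [hγ'spec g s t hg, hγ'spec h s' t' hh,
      hγ'spec (g + h) (s + s') (t + t') (by rw [hg, hh, hiadd, hiadd]; abel),
      hγadd, hγadd, map_mul]
    ring
  have hγ'abs : ∀ g : G, ‖γ' g‖ = 1 := by
    intro g
    simp only [hγ'def]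
    rw [norm_mul, RCLike.norm_conj, hγabs, hγabs, mul_one]
  -- ## the orthonormal family e
  set eE : {y : X // ∃ s : S, (σ s) x = y} → lp (fun _ : G => ℂ) 2 :=
    fun y => ((Real.sqrt ((hfin y.1).toFinset.card) : ℂ))⁻¹ •
      ∑ v ∈ (hfin y.1).toFinset, lp.single 2 (i v) (1 : ℂ) with heE
  have hecoord : ∀ (y : {y : X // ∃ s : S, (σ s) x = y}) (v : S),
      (eE y : G → ℂ) (i v) = if v ∈ (hfin y.1).toFinset
        then ((Real.sqrt ((hfin y.1).toFinset.card) : ℂ))⁻¹ else 0 := by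
    intro y v
    simp only [heE]
    rw [lp.coeFn_smul, Pi.smul_apply, lp.coeFn_sum, Finset.sum_apply]
    have hterm : ∀ u ∈ (hfin y.1).toFinset,
        (lp.single 2 (i u) (1 : ℂ) : lp (fun _ : G => ℂ) 2) (i v)
          = if v = u then (1 : ℂ) else 0 := by
      intro u _
      rw [OrbitDil.single_apply']
      exact if_congr ⟨fun h => hiinj h, fun h => by rw [h]⟩ rfl rfl
    rw [Finset.sum_congr rfl hterm, Finset.sum_ite_eq, smul_eq_mul]
    by_cases hv : v ∈ (hfin y.1).toFinset
    · rw [if_pos hv, if_pos hv, mul_one]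
    · rw [if_neg hv, if_neg hv, mul_zero]
  have hinner_e : ∀ (z : {y : X // ∃ s : S, (σ s) x = y}) (w : lp (fun _ : G => ℂ) 2),
      inner ℂ (eE z) w = ((Real.sqrt ((hfin z.1).toFinset.card) : ℂ))⁻¹ *
        ∑ v ∈ (hfin z.1).toFinset, w (i v) := by
    intro z w
    simp only [heE]
    rw [inner_smul_left, sum_inner, map_inv₀, Complex.conj_ofReal]
    congr 1
    exact Finset.sum_congr rfl fun v _ => by
      rw [lp.inner_single_left, RCLike.inner_apply', map_one, one_mul]
  have hnorm1 : ∀ y : {y : X // ∃ s : S, (σ s) x = y}, ‖eE y‖ = 1 := by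
    intro y
    have hself : inner ℂ (eE y) (eE y) = (1 : ℂ) := by
      rw [hinner_e]
      have hterm : ∀ v ∈ (hfin y.1).toFinset, (eE y : G → ℂ) (i v)
          = ((Real.sqrt ((hfin y.1).toFinset.card) : ℂ))⁻¹ := by
        intro v hv; rw [hecoord, if_pos hv]
      rw [Finset.sum_congr rfl hterm, Finset.sum_const, nsmul_eq_mul]
      have hpos : (0 : ℝ) < ((hfin y.1).toFinset.card : ℝ) := by exact_mod_cast hcard_pos y
      have hss : Real.sqrt ((hfin y.1).toFinset.card) *
          Real.sqrt ((hfin y.1).toFinset.card) = ((hfin y.1).toFinset.card : ℝ) :=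
        Real.mul_self_sqrt (le_of_lt hpos)
      have hs0 : Real.sqrt ((hfin y.1).toFinset.card) ≠ 0 := by positivity
      have hs0' : ((Real.sqrt ((hfin y.1).toFinset.card) : ℂ)) ≠ 0 := by
        exact_mod_cast hs0
      field_simp
      exact_mod_cast (Real.sq_sqrt hpos.le).symm
    have h2 : RCLike.re (inner (𝕜 := ℂ) (eE y) (eE y)) = ‖eE y‖ ^ 2 :=
      inner_self_eq_norm_sq (eE y)
    rw [hself] at h2
    have h3 : ‖eE y‖ ^ 2 = 1 := by
      rw [← h2]; norm_num
    nlinarith [norm_nonneg (eE y)]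
  have horth : ∀ y z : {y : X // ∃ s : S, (σ s) x = y}, y ≠ z →
      inner ℂ (eE y) (eE z) = (0 : ℂ) := by
    intro y z hyz
    rw [hinner_e]
    have hterm : ∀ v ∈ (hfin y.1).toFinset, (eE z : G → ℂ) (i v) = 0 := by
      intro v hv
      rw [hecoord, if_neg (fun hvz => hyz (hdisj y z v hv hvz))]
    rw [Finset.sum_congr rfl hterm, Finset.sum_const_zero, mul_zero]
  -- ## construction of V and U
  obtain ⟨V, hVsingle, hVnorm, hVinner⟩ := OrbitDil.exists_isometry eE hnorm1 horth
  have hUex : ∀ g : G, ∃ Ug : lp (fun _ : G => ℂ) 2 →L[ℂ] lp (fun _ : G => ℂ) 2,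
      (∀ (h : G) (a : ℂ), Ug (lp.single 2 h a) = (γ' g * a) • lp.single 2 (g + h) (1 : ℂ)) ∧
      (∀ f₁ f₂ : lp (fun _ : G => ℂ) 2, inner ℂ (Ug f₁) (Ug f₂) = (inner ℂ f₁ f₂ : ℂ)) := by
    intro g
    have hn1 : ∀ h : G, ‖γ' g • (lp.single 2 (g + h) (1 : ℂ) : lp (fun _ : G => ℂ) 2)‖ = 1 := by
      intro h
      rw [norm_smul, hγ'abs]
      have := lp.norm_single (E := fun _ : G => ℂ) (p := 2) (by norm_num) (g + h) (1 : ℂ)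
      rw [this]
      norm_num
    have hor : ∀ h h' : G, h ≠ h' →
        inner ℂ (γ' g • (lp.single 2 (g + h) (1 : ℂ) : lp (fun _ : G => ℂ) 2))
          (γ' g • (lp.single 2 (g + h') (1 : ℂ) : lp (fun _ : G => ℂ) 2)) = (0 : ℂ) := by
      intro h h' hne
      rw [inner_smul_left, inner_smul_right, lp.inner_single_left, RCLike.inner_apply',
        map_one, one_mul, OrbitDil.single_apply', if_neg (fun hc => hne (add_left_cancel hc))]
      ring
    obtain ⟨Ug, h1, _, h3⟩ := OrbitDil.exists_isometry
      (fun h : G => γ' g • (lp.single 2 (g + h) (1 : ℂ) : lp (fun _ : G => ℂ) 2)) hn1 hor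
    refine ⟨Ug, fun h a => ?_, h3⟩
    rw [h1 h a, smul_smul, mul_comm]
  choose U hU1 hU3 using hUex
  have hUadd : ∀ g h : G, U (g + h) = (U g).comp (U h) := by
    intro g h
    apply OrbitDil.clm_ext_single
    intro k a
    rw [ContinuousLinearMap.comp_apply, hU1 (g + h) k a, hU1 h k a, map_smul,
      hU1 g (h + k) 1, mul_one, smul_smul, hγ'add, add_assoc]
    ring_nf
  have hU0 : U 0 = ContinuousLinearMap.id ℂ (lp (fun _ : G => ℂ) 2) := by
    apply OrbitDil.clm_ext_single
    intro k a
    rw [hU1 0 k a, hγ'0, one_mul, zero_add, ContinuousLinearMap.id_apply,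
      ← OrbitDil.single_eq_smul]
  have hUinv : ∀ g : G, (U g).comp (U (-g)) = ContinuousLinearMap.id ℂ _ := by
    intro g; rw [← hUadd, add_neg_cancel, hU0]
  have hUinv' : ∀ g : G, (U (-g)).comp (U g) = ContinuousLinearMap.id ℂ _ := by
    intro g; rw [← hUadd, neg_add_cancel, hU0]
  have hUadj : ∀ g : G, ContinuousLinearMap.adjoint (U g) = U (-g) := by
    intro g
    symm
    rw [ContinuousLinearMap.eq_adjoint_iff]
    intro f₁ f₂
    have hf₂ : U (-g) (U g f₂) = f₂ := by
      have := congrArg (fun T : lp (fun _ : G => ℂ) 2 →L[ℂ] lp (fun _ : G => ℂ) 2 => T f₂)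
        (hUinv' g)
      simpa using this
    calc inner ℂ (U (-g) f₁) f₂ = inner ℂ (U (-g) f₁) (U (-g) (U g f₂)) := by rw [hf₂]
      _ = inner ℂ f₁ (U g f₂) := hU3 (-g) f₁ (U g f₂)
  -- ## the main identity
  refine ⟨lp (fun _ : G => ℂ) 2, inferInstance, inferInstance, inferInstance, V, U,
    hVnorm, hU0, hUadd, fun g => by rw [hUadj]; exact hUinv g,
    fun g => by rw [hUadj]; exact hUinv' g, ?_⟩
  intro s
  apply OrbitDil.clm_ext_single
  intro y a
  rw [ContinuousLinearMap.comp_apply, ContinuousLinearMap.comp_apply, hVsingle y a,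
    map_smul, map_smul]
  rw [OrbitDil.single_eq_smul y a, map_smul, hρS s y]
  congr 1
  -- now: (γ s * μx s y) • ξ_{στ s y} = V* (U (i s) (eE y))
  have hUe : U (i s) (eE y) = (((Real.sqrt ((hfin y.1).toFinset.card) : ℂ))⁻¹ * γ s) •
      ∑ v ∈ (hfin y.1).toFinset, lp.single 2 (i (s + v)) (1 : ℂ) := by
    simp only [heE]
    rw [map_smul, map_sum]
    have hterm : ∀ v ∈ (hfin y.1).toFinset,
        U (i s) (lp.single 2 (i v) (1 : ℂ)) = γ s • lp.single 2 (i (s + v)) (1 : ℂ) := by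
      intro v _
      rw [hU1 (i s) (i v) 1, mul_one, hγ'i, ← hiadd]
    rw [Finset.sum_congr rfl hterm, ← Finset.smul_sum, smul_smul]
  have hkeyinner : ∀ z : {y : X // ∃ s : S, (σ s) x = y},
      inner ℂ (eE z) (U (i s) (eE y)) =
        (if z = στ s y then (γ s * (μx s y : ℂ)) else 0) := by
    intro z
    rw [hUe, hinner_e z]
    have hco : ∀ v : S,
        (((((Real.sqrt ((hfin y.1).toFinset.card) : ℂ))⁻¹ * γ s) •
          ∑ u ∈ (hfin y.1).toFinset, lp.single 2 (i (s + u)) (1 : ℂ) :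
            lp (fun _ : G => ℂ) 2) : G → ℂ) (i v)
          = (((Real.sqrt ((hfin y.1).toFinset.card) : ℂ))⁻¹ * γ s) *
            ∑ u ∈ (hfin y.1).toFinset, (if v = s + u then (1 : ℂ) else 0) := by
      intro v
      rw [lp.coeFn_smul, Pi.smul_apply, lp.coeFn_sum, Finset.sum_apply, smul_eq_mul]
      congr 1
      refine Finset.sum_congr rfl fun u _ => ?_
      rw [OrbitDil.single_apply']
      exact if_congr ⟨fun h => hiinj h, fun h => by rw [h]⟩ rfl rfl
    rw [Finset.sum_congr rfl (fun v _ => hco v), ← Finset.mul_sum, Finset.sum_comm]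
    have hsum2 : ∀ u ∈ (hfin y.1).toFinset,
        (∑ v ∈ (hfin z.1).toFinset, if v = s + u then (1 : ℂ) else 0)
          = if z = στ s y then (1 : ℂ) else 0 := by
      intro u hu
      rw [Finset.sum_ite_eq' (hfin z.1).toFinset (s + u) (fun _ => (1 : ℂ))]
      exact if_congr (hclass_mem s y z u hu) rfl rfl
    rw [Finset.sum_congr rfl hsum2]
    by_cases hz : z = στ s y
    · subst hz
      simp only [eq_self_iff_true, if_true, Finset.sum_const, nsmul_eq_mul, mul_one]
      rw [hμval s y]
      have hy0 : (0 : ℝ) < ((hfin y.1).toFinset.card : ℝ) := by exact_mod_cast hcard_pos y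
      have hz0 : (0 : ℝ) < ((hfin (στ s y).1).toFinset.card : ℝ) := by
        exact_mod_cast hcard_pos (στ s y)
      have hys : Real.sqrt ((hfin y.1).toFinset.card) ≠ 0 := by positivity
      have hzs : Real.sqrt ((hfin (στ s y).1).toFinset.card) ≠ 0 := by positivity
      have hysC : ((Real.sqrt ((hfin y.1).toFinset.card) : ℝ) : ℂ) ≠ 0 := by exact_mod_cast hys
      have hzsC : ((Real.sqrt ((hfin (στ s y).1).toFinset.card) : ℝ) : ℂ) ≠ 0 := by
        exact_mod_cast hzs
      have hcards : ((hfin y.1).toFinset.card : ℂ)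
          = ((Real.sqrt ((hfin y.1).toFinset.card) : ℝ) : ℂ) *
            ((Real.sqrt ((hfin y.1).toFinset.card) : ℝ) : ℂ) := by
        exact_mod_cast (Real.mul_self_sqrt hy0.le).symm
      rw [Complex.ofReal_div]
      field_simp
      rw [hcards]
      ring
    · simp [hz]
  -- conclude the vector identity by comparing coordinates
  refine lp.ext (funext fun z => ?_)
  rw [OrbitDil.coord_eq_inner ((ContinuousLinearMap.adjoint V) (U (i s) (eE y))) z,
    ContinuousLinearMap.adjoint_inner_right, hVsingle z 1, one_smul, hkeyinner z,
    lp.coeFn_smul, Pi.smul_apply, OrbitDil.single_apply', smul_eq_mul]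
  by_cases hz : z = στ s y
  · rw [if_pos hz, if_pos hz, mul_one]
  · rw [if_neg hz, if_neg hz, mul_zero]
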